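/- Let S ∈ Sym_h(ℚ) be positive definite, T ∈ 𝔥_n, Z ∈ M_{n,h}(ℂ). For all M, N ∈ M_{n,h}(ℤ): θ^S(T, Z + T M S + N) · exp(πi Tr(ᵗM T M S + 2 ᵗM Z)) = θ^S(T, Z), where θ^S(T,Z) := Σ_{L ∈ M_{n,h}(ℤ)} exp(πi Tr(ᵗL T L S + 2 ᵗL Z)). -/
import Mathlib


open Real Complex Matrix

/-- The generalized theta series
`θ^S(T,Z) = Σ_{L∈M_{n,h}(ℤ)} e^{πi Tr(ᵗL T L S + 2ᵗL Z)}`. -/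
noncomputable def thetaS (n h : ℕ) (S : Matrix (Fin h) (Fin h) ℚ)
    (T : Matrix (Fin n) (Fin n) ℂ) (Z : Matrix (Fin n) (Fin h) ℂ) : ℂ :=
  ∑' L : Matrix (Fin n) (Fin h) ℤ, Complex.exp ((π : ℂ) * Complex.I *
    (((L.map (Int.cast : ℤ → ℂ))ᵀ * T * L.map (Int.cast : ℤ → ℂ) *
        S.map (Rat.cast : ℚ → ℂ) +
      (2 : ℂ) • ((L.map (Int.cast : ℤ → ℂ))ᵀ * Z)).trace))

/-- Quasi-periodicity of the generalized Jacobi theta: for all `M, N ∈ M_{n,h}(ℤ)`,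
`θ^S(T, Z + TMS + N) · e^{πi Tr(ᵗM T M S + 2ᵗM Z)} = θ^S(T,Z)`. -/
theorem thetaS_quasi_periodic (n h : ℕ) (S : Matrix (Fin h) (Fin h) ℚ)
    (hSsymm : Sᵀ = S) (hSpos : (S.map (Rat.cast : ℚ → ℝ)).PosDef)
    (T : Matrix (Fin n) (Fin n) ℂ) (hT : Tᵀ = T)
    (hTim : Matrix.PosDef (Matrix.of fun i j => (T i j).im))
    (Z : Matrix (Fin n) (Fin h) ℂ) (M N : Matrix (Fin n) (Fin h) ℤ) :
    thetaS n h S T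
        (Z + T * M.map (Int.cast : ℤ → ℂ) * S.map (Rat.cast : ℚ → ℂ) +
          N.map (Int.cast : ℤ → ℂ)) *
      Complex.exp ((π : ℂ) * Complex.I *
        (((M.map (Int.cast : ℤ → ℂ))ᵀ * T * M.map (Int.cast : ℤ → ℂ) *
            S.map (Rat.cast : ℚ → ℂ) +
          (2 : ℂ) • ((M.map (Int.cast : ℤ → ℂ))ᵀ * Z)).trace)) =
    thetaS n h S T Z := by
  classical
  set S' : Matrix (Fin h) (Fin h) ℂ := S.map (Rat.cast : ℚ → ℂ) with hS'
  set M' : Matrix (Fin n) (Fin h) ℂ := M.map (Int.cast : ℤ → ℂ) with hM'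
  set N' : Matrix (Fin n) (Fin h) ℂ := N.map (Int.cast : ℤ → ℂ) with hN'
  have hS'symm : S'ᵀ = S' := by
    rw [hS', ← Matrix.transpose_map, hSsymm]
  -- general symmetry of the bilinear trace form
  have key : ∀ A B : Matrix (Fin n) (Fin h) ℂ,
      (Bᵀ * T * A * S').trace = (Aᵀ * T * B * S').trace := by
    intro A B
    conv_lhs => rw [← Matrix.trace_transpose]
    rw [show (Bᵀ * T * A * S')ᵀ = S'ᵀ * (Aᵀ * Tᵀ * B) by
      simp [Matrix.transpose_mul, Matrix.mul_assoc]]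
    rw [hS'symm, hT, ← Matrix.trace_mul_comm]
  unfold thetaS
  have reindex := (Equiv.addRight M).tsum_eq
    (fun L : Matrix (Fin n) (Fin h) ℤ => Complex.exp ((π : ℂ) * Complex.I *
      (((L.map (Int.cast : ℤ → ℂ))ᵀ * T * L.map (Int.cast : ℤ → ℂ) * S' +
        (2 : ℂ) • ((L.map (Int.cast : ℤ → ℂ))ᵀ * Z)).trace)))
  rw [← tsum_mul_right, ← reindex]
  congr 1
  funext L
  set L' : Matrix (Fin n) (Fin h) ℂ := L.map (Int.cast : ℤ → ℂ) with hL'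
  have hLM : ((Equiv.addRight M) L).map (Int.cast : ℤ → ℂ) = L' + M' := by
    simp only [Equiv.coe_addRight, hL', hM']
    ext i j; simp
  simp only [hLM, Equiv.coe_addRight]
  rw [← Complex.exp_add]
  -- integer trace
  have hadd : ((L + M).map (Int.cast : ℤ → ℂ)) = L' + M' := by
    rw [hL', hM']; ext i j; simp
  have hInt : (L'ᵀ * N').trace = (((Lᵀ * N).trace : ℤ) : ℂ) := by
    rw [hL', hN', ← Matrix.transpose_map]
    simp only [Matrix.trace, Matrix.diag, Matrix.mul_apply, Matrix.map_apply]
    push_cast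
    rfl
  have expand : (π : ℂ) * Complex.I *
      ((L'ᵀ * T * L' * S' + (2 : ℂ) • (L'ᵀ * (Z + T * M' * S' + N'))).trace) +
      (π : ℂ) * Complex.I *
      ((M'ᵀ * T * M' * S' + (2 : ℂ) • (M'ᵀ * Z)).trace) =
      (π : ℂ) * Complex.I *
      (((L' + M')ᵀ * T * (L' + M') * S' + (2 : ℂ) • ((L' + M')ᵀ * Z)).trace) +
      ((Lᵀ * N).trace : ℤ) * (2 * π * Complex.I) := by
    rw [← hInt]
    have e1 : (L' + M')ᵀ * T * (L' + M') * S' =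
        L'ᵀ * T * L' * S' + L'ᵀ * T * M' * S' + M'ᵀ * T * L' * S' +
          M'ᵀ * T * M' * S' := by
      simp only [Matrix.transpose_add, Matrix.add_mul, Matrix.mul_add]
      abel
    have e2 : L'ᵀ * (Z + T * M' * S' + N') =
        L'ᵀ * Z + L'ᵀ * T * M' * S' + L'ᵀ * N' := by
      simp only [Matrix.mul_add, Matrix.mul_assoc]
    rw [e1, e2]
    simp only [Matrix.trace_add, smul_add, Matrix.transpose_add,
      Matrix.add_mul, Matrix.trace_smul, smul_eq_mul]
    rw [key L' M']
    ring
  rw [hadd, expand, Complex.exp_add, Complex.exp_int_mul_two_pi_mul_I, mul_one]
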